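/- Let M be a module over the ring C⁰(ℤ_p,𝔽_p) of continuous functions ℤ_p → 𝔽_p, and suppose the set of p-adic integers x with M_x = M/𝓘(x)M ≠ 0 is finite, say equal to {x₁,…,x_n} with the x_i pairwise distinct. Then V(ann M) = {x₁,…,x_n}, where ann M is the annihilator of M in C⁰(ℤ_p,𝔽_p). -/

import Mathlib

/-- `𝔽_p = ZMod p` carries the discrete topology. -/
instance (p : ℕ) : TopologicalSpace (ZMod p) := ⊥

instance (p : ℕ) : DiscreteTopology (ZMod p) := ⟨rfl⟩

/-- For `x ∈ ℤ_p`, the maximal ideal `𝓘(x) = {F ∈ C⁰(ℤ_p, 𝔽_p) : F(x) = 0}` of the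
ring of continuous functions `ℤ_p → 𝔽_p`. -/
noncomputable def evalIdeal (p : ℕ) [Fact p.Prime] (x : PadicInt p) : Ideal C(PadicInt p, ZMod p) :=
  RingHom.ker ((Pi.evalRingHom (fun _ : PadicInt p => ZMod p) x).comp
    (ContinuousMap.coeFnRingHom))

lemma mem_evalIdeal_iff {p : ℕ} [Fact p.Prime] {x : PadicInt p} {F : C(PadicInt p, ZMod p)} :
    F ∈ evalIdeal p x ↔ F x = 0 := by
  simp [evalIdeal, RingHom.mem_ker]

open Classical in
/-- The indicator function of a clopen set, as a continuous map to `ZMod p`. -/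
noncomputable def chi (p : ℕ) [Fact p.Prime] (U : Set (PadicInt p)) (hU : IsClopen U) :
    C(PadicInt p, ZMod p) :=
  ⟨fun z => if z ∈ U then 1 else 0, by
    have h1 : Continuous U.boolIndicator := (continuous_boolIndicator_iff_isClopen U).mpr hU
    have h2 : (fun z => if z ∈ U then (1 : ZMod p) else 0)
        = (fun b : Bool => if b then (1 : ZMod p) else 0) ∘ U.boolIndicator := by
      funext z
      by_cases hz : z ∈ U <;> simp [Set.boolIndicator, hz]
    rw [h2]
    exact continuous_of_discreteTopology.comp h1⟩

open Classical in
lemma chi_apply (p : ℕ) [Fact p.Prime] (U : Set (PadicInt p)) (hU : IsClopen U) (z : PadicInt p) :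
    chi p U hU z = if z ∈ U then 1 else 0 := rfl

/-- If an element of a module can be killed near every point, it is zero. -/
lemma eq_zero_of_forall_exists {p : ℕ} [Fact p.Prime] {M : Type*} [AddCommGroup M]
    [Module C(PadicInt p, ZMod p) M] (n : M)
    (h : ∀ y : PadicInt p, ∃ f : C(PadicInt p, ZMod p), f y = 1 ∧ f • n = 0) : n = 0 := by
  classical
  choose f hf1 hf0 using h
  have hopen : ∀ y : PadicInt p, IsOpen ((f y) ⁻¹' {1}) :=
    fun y => (isOpen_discrete _).preimage (f y).continuous
  have hcov : (Set.univ : Set (PadicInt p)) ⊆ ⋃ y, (f y) ⁻¹' {1} := by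
    intro z _
    exact Set.mem_iUnion.mpr ⟨z, hf1 z⟩
  obtain ⟨T, hT⟩ := isCompact_univ.elim_finite_subcover _ hopen hcov
  have hprod : (∏ y ∈ T, (1 - f y)) = 0 := by
    ext z
    obtain ⟨y, hyT, hy⟩ : ∃ y ∈ T, f y z = 1 := by
      have := hT (Set.mem_univ z)
      simpa using this
    simp only [ContinuousMap.prod_apply, ContinuousMap.zero_apply]
    exact Finset.prod_eq_zero hyT (by simp [hy])
  have hsmul : ∀ T : Finset (PadicInt p), (∏ y ∈ T, (1 - f y)) • n = n := by
    intro T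
    induction T using Finset.induction_on with
    | empty => simp
    | @insert a T ha ih =>
      rw [Finset.prod_insert ha, mul_smul, ih, sub_smul, one_smul, hf0, sub_zero]
  have := hsmul T
  rw [hprod, zero_smul] at this
  exact this.symm

/-- If `n ∈ 𝓘(y) • ⊤`, then there is `f` with `f y = 1` and `f • n = 0`. -/
lemma exists_kill {p : ℕ} [Fact p.Prime] {M : Type*} [AddCommGroup M]
    [Module C(PadicInt p, ZMod p) M] {y : PadicInt p} {n : M}
    (hn : n ∈ evalIdeal p y • (⊤ : Submodule C(PadicInt p, ZMod p) M)) :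
    ∃ f : C(PadicInt p, ZMod p), f y = 1 ∧ f • n = 0 := by
  refine Submodule.smul_induction_on hn ?_ ?_
  · intro g hg m _
    have hgy : g y = 0 := mem_evalIdeal_iff.mp hg
    have hU : IsClopen (g ⁻¹' {0}) := (isClopen_discrete _).preimage g.continuous
    refine ⟨chi p _ hU, ?_, ?_⟩
    · rw [chi_apply]
      simp [hgy]
    · have hmul : chi p _ hU * g = 0 := by
        ext z
        by_cases hz : g z = 0 <;> simp [chi_apply, hz]
      rw [← mul_smul, hmul, zero_smul]
  · rintro n₁ n₂ ⟨f₁, h₁, e₁⟩ ⟨f₂, h₂, e₂⟩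
    refine ⟨f₁ * f₂, by simp [h₁, h₂], ?_⟩
    have hA : (f₁ * f₂) • n₁ = 0 := by rw [mul_comm, mul_smul, e₁, smul_zero]
    have hB : (f₁ * f₂) • n₂ = 0 := by rw [mul_smul, e₂, smul_zero]
    rw [smul_add, hA, hB, add_zero]

/-- Separation: there is a `{0,1}`-valued continuous function equal to `1` at `x` and
vanishing on a finite set avoiding `x`. -/
lemma exists_sep {p : ℕ} [Fact p.Prime] (s : Finset (PadicInt p)) {x : PadicInt p}
    (hx : x ∉ s) :
    ∃ e : C(PadicInt p, ZMod p),
      e x = 1 ∧ (∀ y ∈ s, e y = 0) ∧ ∀ z, e z = 0 ∨ e z = 1 := by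
  classical
  have key : ∀ y : PadicInt p, ∃ U : Set (PadicInt p),
      IsClopen U ∧ x ∈ U ∧ (y ∈ s → y ∉ U) := by
    intro y
    by_cases hy : y ∈ s
    · obtain ⟨U, h1, h2, h3⟩ :=
        exists_isClopen_of_totally_separated (fun h : x = y => hx (h ▸ hy))
      exact ⟨U, h1, h2, fun _ => h3⟩
    · exact ⟨Set.univ, isClopen_univ, trivial, fun h => absurd h hy⟩
  choose U hU hxU hyU using key
  refine ⟨∏ y ∈ s, chi p (U y) (hU y), ?_, ?_, ?_⟩
  · rw [ContinuousMap.prod_apply]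
    refine Finset.prod_eq_one fun y _ => ?_
    simp [chi_apply, hxU y]
  · intro y hy
    rw [ContinuousMap.prod_apply]
    refine Finset.prod_eq_zero hy ?_
    simp [chi_apply, hyU y hy]
  · intro z
    rw [ContinuousMap.prod_apply]
    by_cases hz : ∀ y ∈ s, z ∈ U y
    · right
      exact Finset.prod_eq_one fun y hy => by simp [chi_apply, hz y hy]
    · left
      push_neg at hz
      obtain ⟨y, hy, hzy⟩ := hz
      exact Finset.prod_eq_zero hy (by simp [chi_apply, hzy])

/-- Let `M` be a module over `C⁰(ℤ_p, 𝔽_p)` such that the set of `x ∈ ℤ_p`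
with `M_x = M/𝓘(x)M ≠ 0` is finite, equal to `{x₁,…,xₙ}` (a finset `s`). Then
`V(ann M) = {x₁,…,xₙ}`. -/
theorem zeroSet_annihilator_eq (p : ℕ) [Fact p.Prime]
    (M : Type*) [AddCommGroup M] [Module C(PadicInt p, ZMod p) M]
    (s : Finset (PadicInt p))
    (hs : ∀ x : PadicInt p,
      (evalIdeal p x • (⊤ : Submodule C(PadicInt p, ZMod p) M) ≠ ⊤) ↔ x ∈ s) :
    {x : PadicInt p | ∀ F ∈ Module.annihilator C(PadicInt p, ZMod p) M, F x = 0}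
      = (s : Set (PadicInt p)) := by
  ext x
  simp only [Set.mem_setOf_eq, Finset.mem_coe]
  constructor
  · intro hx
    by_contra hxs
    obtain ⟨e, hex, hes, hval⟩ := exists_sep s hxs
    have he2 : e * e = e := by
      ext z
      rcases hval z with h | h <;> simp [h]
    have hann : e ∈ Module.annihilator C(PadicInt p, ZMod p) M := by
      rw [Module.mem_annihilator]
      intro m
      apply eq_zero_of_forall_exists (p := p)
      intro y
      rcases hval y with h0 | h1
      · refine ⟨1 - e, by simp [h0], ?_⟩
        rw [← mul_smul, sub_mul, one_mul, he2, sub_self, zero_smul]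
      · have hys : y ∉ s := fun hy => by
          rw [hes y hy] at h1
          exact zero_ne_one h1
        have htop : evalIdeal p y • (⊤ : Submodule C(PadicInt p, ZMod p) M) = ⊤ := by
          by_contra h
          exact hys ((hs y).1 h)
        have hmem : e • m ∈ evalIdeal p y • (⊤ : Submodule C(PadicInt p, ZMod p) M) := by
          rw [htop]
          exact Submodule.mem_top
        exact exists_kill hmem
    have := hx e hann
    rw [hex] at this
    exact one_ne_zero this
  · intro hxs F hF
    by_contra hFx
    have h1 : evalIdeal p x • (⊤ : Submodule C(PadicInt p, ZMod p) M) = ⊤ := by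
      rw [eq_top_iff]
      intro m _
      have key : m = (1 - ContinuousMap.const _ (F x)⁻¹ * F) • m := by
        rw [sub_smul, one_smul, mul_smul]
        have hFm : F • m = 0 := Module.mem_annihilator.mp hF m
        rw [hFm, smul_zero, sub_zero]
      rw [key]
      refine Submodule.smul_mem_smul ?_ Submodule.mem_top
      rw [mem_evalIdeal_iff]
      simp [inv_mul_cancel₀ hFx]
    exact ((hs x).2 hxs) h1
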